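/- Let $k \geq 1$ and define the sequence $f_0 = 1$, $f_t = \max\{0, f_{t-1} \cdot d_{t-1} - k\}$ for $t \geq 1$, where $d_0, d_1, d_2, \dots$ is a sequence of positive integers. Then for all $t \geq 1$, $f_t = \max\{0, \prod_{i=0}^{t-1} d_i - k(1 + \sum_{i=1}^{t-1} \prod_{j=i}^{t-1} d_j)\}$. -/

import Mathlib

open Finset in
theorem firefighter_birth_sequence_closed_form
    (k : ℤ) (hk : 1 ≤ k) (d : ℕ → ℤ) (hd : ∀ i, 0 < d i)
    (f : ℕ → ℤ) (hf0 : f 0 = 1)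
    (hf : ∀ t, f (t + 1) = max 0 (f t * d t - k)) :
    ∀ t, 1 ≤ t →
      f t = max 0 ((∏ i ∈ range t, d i) -
        k * (1 + ∑ i ∈ Ico 1 t, ∏ j ∈ Ico i t, d j)) := by
  intro t ht
  induction t, ht using Nat.le_induction with
  | base => simp [hf 0, hf0]
  | succ n hn ih =>
    set A : ℤ := (∏ i ∈ range n, d i) -
        k * (1 + ∑ i ∈ Ico 1 n, ∏ j ∈ Ico i n, d j) with hA
    have key : (∏ i ∈ range (n + 1), d i) -
        k * (1 + ∑ i ∈ Ico 1 (n + 1), ∏ j ∈ Ico i (n + 1), d j)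
        = A * d n - k := by
      rw [Finset.prod_range_succ]
      rw [Finset.sum_Ico_succ_top hn]
      have hsum : ∑ i ∈ Ico 1 n, ∏ j ∈ Ico i (n + 1), d j
          = ∑ i ∈ Ico 1 n, (∏ j ∈ Ico i n, d j) * d n := by
        apply Finset.sum_congr rfl
        intro i hi
        rw [Finset.prod_Ico_succ_top (by
          exact le_of_lt (Finset.mem_Ico.mp hi).2)]
      rw [hsum]
      have : ∏ j ∈ Ico n (n + 1), d j = d n := by simp
      rw [this, hA, ← Finset.sum_mul]
      ring
    rw [hf n, ih, key]
    rcases le_or_gt 0 A with h | h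
    · rw [max_eq_right h]
    · have h1 : A * d n - k < 0 := by
        have := mul_nonpos_of_nonpos_of_nonneg h.le (hd n).le
        nlinarith
      rw [max_eq_left h.le]
      rw [max_eq_left h1.le, max_eq_left (by linarith : (0:ℤ) * d n - k ≤ 0)]
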